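/- The group [K,G] contains X*C, the product (1*C)(0*C) of the two first-level copies of C. -/

import Mathlib

open Equiv

/-! ## The binary rooted tree and the twisted twin of the Grigorchuk group

We identify the vertex set of the infinite rooted binary tree with `V = List Bool`
(the free monoid `X*` on `X = {0,1}`), and realize automorphisms of the tree as
permutations of `V`.  The generators `a, b, c, d` of the twisted twin `G` of the
Grigorchuk group are defined by the recursive rules
`a(xw) = (¬x)w`, `ψ(b) = (c,a)`, `ψ(c) = (a,d)`, `ψ(d) = (1,b)`. -/

abbrev V : Type := List Bool

def actA : V → V
  | [] => []
  | x :: w => (!x) :: w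

theorem actA_invol : Function.Involutive actA := fun w => by
  cases w with
  | nil => rfl
  | cons x w => simp [actA]

mutual
  def actB : V → V
    | [] => []
    | false :: w => false :: actC w
    | true :: w => true :: actA w
  def actC : V → V
    | [] => []
    | false :: w => false :: actA w
    | true :: w => true :: actD w
  def actD : V → V
    | [] => []
    | false :: w => false :: w
    | true :: w => true :: actB w
end

theorem act_invol3 (w : V) :
    actB (actB w) = w ∧ actC (actC w) = w ∧ actD (actD w) = w := by
  induction w with
  | nil => exact ⟨rfl, rfl, rfl⟩
  | cons x w ih =>
    cases x <;>
      exact ⟨by simp [actB, actC, actD, ih.1, ih.2.1, ih.2.2, actA_invol w],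
        by simp [actB, actC, actD, ih.1, ih.2.1, ih.2.2, actA_invol w],
        by simp [actB, actC, actD, ih.1, ih.2.1, ih.2.2, actA_invol w]⟩

theorem actB_invol : Function.Involutive actB := fun w => (act_invol3 w).1
theorem actC_invol : Function.Involutive actC := fun w => (act_invol3 w).2.1
theorem actD_invol : Function.Involutive actD := fun w => (act_invol3 w).2.2

/-- The generator `a`: the root swap. -/
def a : Perm V := actA_invol.toPerm actA
/-- The generator `b`, with `ψ(b) = (c, a)`. -/
def b : Perm V := actB_invol.toPerm actB
/-- The generator `c`, with `ψ(c) = (a, d)`. -/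
def c : Perm V := actC_invol.toPerm actC
/-- The generator `d`, with `ψ(d) = (1, b)`. -/
def d : Perm V := actD_invol.toPerm actD

@[simp] theorem coe_a : ⇑a = actA := rfl
@[simp] theorem coe_b : ⇑b = actB := rfl
@[simp] theorem coe_c : ⇑c = actC := rfl
@[simp] theorem coe_d : ⇑d = actD := rfl

/-- The twisted twin of the Grigorchuk group. -/
def G : Subgroup (Perm V) := Subgroup.closure {a, b, c, d}

theorem a_mem_G : a ∈ G := Subgroup.subset_closure (by simp)
theorem b_mem_G : b ∈ G := Subgroup.subset_closure (by simp)
theorem c_mem_G : c ∈ G := Subgroup.subset_closure (by simp)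
theorem d_mem_G : d ∈ G := Subgroup.subset_closure (by simp)

/-- `hasState g v s` says that the state (section) of `g` at the vertex `v` is `s`,
i.e. `g (v ++ w) = g v ++ s w` for all `w`. -/
def hasState (g : Perm V) (v : V) (s : Perm V) : Prop :=
  ∀ w : V, g (v ++ w) = g v ++ s w

def vstarFun (v : V) (f : V → V) : V → V :=
  fun w => if v <+: w then v ++ f (w.drop v.length) else w

theorem vstarFun_comp (v : V) (f f' : V → V) (w : V) :
    vstarFun v f (vstarFun v f' w) = vstarFun v (f ∘ f') w := by
  by_cases h : v <+: w
  · obtain ⟨t, rfl⟩ := h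
    simp [vstarFun, List.prefix_append, List.drop_left]
  · simp [vstarFun, h]

theorem vstarFun_id (v w : V) : vstarFun v id w = w := by
  by_cases h : v <+: w
  · obtain ⟨t, rfl⟩ := h
    simp [vstarFun, List.prefix_append, List.drop_left]
  · simp [vstarFun, h]

/-- `vstar v g` is the automorphism `v * g`, acting as `g` on the subtree rooted
at `v` and trivially elsewhere. -/
def vstar (v : V) (g : Perm V) : Perm V where
  toFun := vstarFun v g
  invFun := vstarFun v g.symm
  left_inv := fun w => by
    rw [vstarFun_comp, Equiv.symm_comp_self]
    exact vstarFun_id v w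
  right_inv := fun w => by
    rw [vstarFun_comp, Equiv.self_comp_symm]
    exact vstarFun_id v w

/-- `XstarSub n H` is the subgroup `Xⁿ * H`: the product of the copies `v * H`
over all vertices `v` of level `n` (equivalently, the subgroup they generate). -/
def XstarSub (n : ℕ) (H : Subgroup (Perm V)) : Subgroup (Perm V) :=
  Subgroup.closure {p | ∃ v : V, ∃ g : Perm V, v.length = n ∧ g ∈ H ∧ p = vstar v g}

/-- `pairPerm s₀ s₁ = ψ⁻¹(s₀, s₁)`: the first-level stabilizer element whose states
at the vertices `0` and `1` are `s₀` and `s₁`. -/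
def pairPerm (s₀ s₁ : Perm V) : Perm V := vstar [false] s₀ * vstar [true] s₁

/-- The permutations fixing every vertex of level `n`. -/
def stabLevel (n : ℕ) : Subgroup (Perm V) where
  carrier := {g : Perm V | ∀ v : V, v.length = n → g v = v}
  one_mem' := fun _ _ => rfl
  mul_mem' := by
    intro g h hg hh v hv
    show g (h v) = v
    rw [hh v hv, hg v hv]
  inv_mem' := by
    intro g hg v hv
    show g⁻¹ v = v
    conv_lhs => rw [← hg v hv]
    exact Equiv.symm_apply_apply g v

/-- The `n`-th level stabilizer `Stab_G(n)` of `G`. -/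
def stabG (n : ℕ) : Subgroup (Perm V) := G ⊓ stabLevel n

/-- The commutator `[x, y] = x⁻¹ y⁻¹ x y` (paper convention). -/
def pc (x y : Perm V) : Perm V := x⁻¹ * y⁻¹ * x * y
/-- Conjugation `xʸ = y⁻¹ x y`. -/
def cj (x y : Perm V) : Perm V := y⁻¹ * x * y

/-- The normal closure in `G` of a subset `S` of `G`. -/
def ncl (S : Set (Perm V)) : Subgroup (Perm V) :=
  Subgroup.closure {x | ∃ s ∈ S, ∃ g ∈ G, x = g⁻¹ * s * g}

/-- `K = ⟨[a,b],[b,c],[b,d],[c,d], bcd⟩^G`. -/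
def K : Subgroup (Perm V) := ncl {pc a b, pc b c, pc b d, pc c d, b * c * d}

/-- The subgroup `[K, G]`. -/
def KG : Subgroup (Perm V) := ⁅K, G⁆

/-- The subgroup `C`, generated by `[K,G]` and `[a,b][b,c]`. -/
def Csub : Subgroup (Perm V) := KG ⊔ Subgroup.closure {pc a b * pc b c}

/-- `γ_n(G)`, the `n`-th term of the lower central series of `G` (starting at `γ₁ = G`),
viewed as a subgroup of `Perm V`. -/
def gammaG (n : ℕ) : Subgroup (Perm V) :=
  Subgroup.map G.subtype ((⊤ : Subgroup ↥G).lowerCentralSeries (n - 1))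



/-! ### Auxiliary development for `stmt12` -/

open scoped commutatorElement

@[simp] theorem actA_actA (w : V) : actA (actA w) = w := actA_invol w
@[simp] theorem actB_actB (w : V) : actB (actB w) = w := actB_invol w
@[simp] theorem actC_actC (w : V) : actC (actC w) = w := actC_invol w
@[simp] theorem actD_actD (w : V) : actD (actD w) = w := actD_invol w

@[simp] theorem actA_nil : actA [] = [] := rfl
@[simp] theorem actA_cons (x : Bool) (w : V) : actA (x :: w) = (!x) :: w := rfl
@[simp] theorem actB_nil : actB [] = [] := rfl
@[simp] theorem actB_false (w : V) : actB (false :: w) = false :: actC w := rfl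
@[simp] theorem actB_true (w : V) : actB (true :: w) = true :: actA w := rfl
@[simp] theorem actC_nil : actC [] = [] := rfl
@[simp] theorem actC_false (w : V) : actC (false :: w) = false :: actA w := rfl
@[simp] theorem actC_true (w : V) : actC (true :: w) = true :: actD w := rfl
@[simp] theorem actD_nil : actD [] = [] := rfl
@[simp] theorem actD_false (w : V) : actD (false :: w) = false :: w := rfl
@[simp] theorem actD_true (w : V) : actD (true :: w) = true :: actB w := rfl

@[simp] theorem a_inv : a⁻¹ = a := Equiv.ext fun _ => rfl
@[simp] theorem b_inv : b⁻¹ = b := Equiv.ext fun _ => rfl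
@[simp] theorem c_inv : c⁻¹ = c := Equiv.ext fun _ => rfl
@[simp] theorem d_inv : d⁻¹ = d := Equiv.ext fun _ => rfl

@[simp] theorem pairPerm_nil (g h : Perm V) : pairPerm g h ([] : V) = [] := by
  simp [pairPerm, vstar, vstarFun, Perm.mul_apply]

@[simp] theorem pairPerm_cons_false (g h : Perm V) (w : V) :
    pairPerm g h (false :: w) = false :: g w := by
  simp [pairPerm, vstar, vstarFun, Perm.mul_apply, List.cons_prefix_cons]

@[simp] theorem pairPerm_cons_true (g h : Perm V) (w : V) :
    pairPerm g h (true :: w) = true :: h w := by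
  simp [pairPerm, vstar, vstarFun, Perm.mul_apply, List.cons_prefix_cons]

theorem pairPerm_one : pairPerm 1 1 = (1 : Perm V) := by
  refine Equiv.ext fun w => ?_
  rcases w with _ | ⟨x, w⟩
  · simp
  · cases x <;> simp

theorem pairPerm_mul (g0 g1 h0 h1 : Perm V) :
    pairPerm g0 g1 * pairPerm h0 h1 = pairPerm (g0 * h0) (g1 * h1) := by
  refine Equiv.ext fun w => ?_
  rcases w with _ | ⟨x, w⟩
  · simp
  · cases x <;> simp

theorem pairPerm_inv (g0 g1 : Perm V) :
    (pairPerm g0 g1)⁻¹ = pairPerm g0⁻¹ g1⁻¹ := by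
  apply inv_eq_of_mul_eq_one_left
  rw [pairPerm_mul]
  simp [pairPerm_one]

theorem pairPerm_swap (g : Perm V) : pairPerm 1 g = a⁻¹ * pairPerm g 1 * a := by
  refine Equiv.ext fun w => ?_
  rcases w with _ | ⟨x, w⟩
  · simp
  · cases x <;> simp

theorem pairPerm_swap' (g : Perm V) : pairPerm g 1 = a⁻¹ * pairPerm 1 g * a := by
  refine Equiv.ext fun w => ?_
  rcases w with _ | ⟨x, w⟩
  · simp
  · cases x <;> simp

theorem vstar_false_eq (g : Perm V) : vstar [false] g = pairPerm g 1 := by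
  refine Equiv.ext fun w => ?_
  rcases w with _ | ⟨x, w⟩
  · simp [vstar, vstarFun]
  · cases x <;> simp [vstar, vstarFun, List.cons_prefix_cons]

theorem vstar_true_eq (g : Perm V) : vstar [true] g = pairPerm 1 g := by
  refine Equiv.ext fun w => ?_
  rcases w with _ | ⟨x, w⟩
  · simp [vstar, vstarFun]
  · cases x <;> simp [vstar, vstarFun, List.cons_prefix_cons]

theorem pair_conj0 (u g0 g1 : Perm V) :
    (pairPerm g0 g1)⁻¹ * pairPerm u 1 * pairPerm g0 g1 = pairPerm (g0⁻¹ * u * g0) 1 := by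
  rw [pairPerm_inv, pairPerm_mul, pairPerm_mul]
  simp [mul_assoc]

theorem pair_conj1 (u g0 g1 : Perm V) :
    (pairPerm g0 g1)⁻¹ * pairPerm 1 u * pairPerm g0 g1 = pairPerm 1 (g1⁻¹ * u * g1) := by
  rw [pairPerm_inv, pairPerm_mul, pairPerm_mul]
  simp [mul_assoc]

theorem pair_comm0 (u g0 g1 : Perm V) :
    ⁅pairPerm u 1, pairPerm g0 g1⁆ = pairPerm ⁅u, g0⁆ 1 := by
  rw [commutatorElement_def, commutatorElement_def, pairPerm_inv, pairPerm_inv,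
    pairPerm_mul, pairPerm_mul, pairPerm_mul]
  simp

theorem pair_comm1 (u g0 g1 : Perm V) :
    ⁅pairPerm 1 u, pairPerm g0 g1⁆ = pairPerm 1 ⁅u, g1⁆ := by
  rw [commutatorElement_def, commutatorElement_def, pairPerm_inv, pairPerm_inv,
    pairPerm_mul, pairPerm_mul, pairPerm_mul]
  simp

/-! Wreath decompositions of the generators. -/

theorem b_eq : b = pairPerm c a := by
  refine Equiv.ext fun w => ?_; rcases w with _ | ⟨x, w⟩
  · rfl
  · cases x <;> simp

theorem c_eq : c = pairPerm a d := by
  refine Equiv.ext fun w => ?_; rcases w with _ | ⟨x, w⟩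
  · rfl
  · cases x <;> simp

theorem d_eq : d = pairPerm 1 b := by
  refine Equiv.ext fun w => ?_; rcases w with _ | ⟨x, w⟩
  · rfl
  · cases x <;> simp

theorem ada_eq : pairPerm b 1 = a * d * a := by
  refine Equiv.ext fun w => ?_; rcases w with _ | ⟨x, w⟩
  · rfl
  · cases x <;> simp

theorem aca_eq : pairPerm d a = a * c * a := by
  refine Equiv.ext fun w => ?_; rcases w with _ | ⟨x, w⟩
  · rfl
  · cases x <;> simp

theorem aba_eq : pairPerm a c = a * b * a := by
  refine Equiv.ext fun w => ?_; rcases w with _ | ⟨x, w⟩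
  · rfl
  · cases x <;> simp

/-! The key explicit identities. -/

theorem I1 : pairPerm 1 (pc a b) = pc b d := by
  refine Equiv.ext fun w => ?_; rcases w with _ | ⟨x, w⟩
  · simp [pc]
  · cases x <;> simp [pc]

theorem I2 : pairPerm 1 (pc b d) = (pc c d)⁻¹ := by
  refine Equiv.ext fun w => ?_; rcases w with _ | ⟨x, w⟩
  · simp [pc]
  · cases x <;> simp [pc]

theorem I3 : pairPerm 1 (pc b c) =
    (d⁻¹ * pc a b * d) * (a⁻¹ * pc a b * a) *
      ((a * b * a)⁻¹ * pc b d * (a * b * a)) := by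
  refine Equiv.ext fun w => ?_; rcases w with _ | ⟨x, w⟩
  · simp [pc]
  · cases x <;> simp [pc]

theorem I4 : pairPerm 1 (pc c d) =
    pc a b * ((c * b)⁻¹ * pc a b * (c * b)) * pc b c := by
  refine Equiv.ext fun w => ?_; rcases w with _ | ⟨x, w⟩
  · simp [pc]
  · cases x <;> simp [pc]

theorem I5 : pairPerm 1 (b * c * d) =
    (d⁻¹ * pc a b * d) * (d⁻¹ * (b * c * d) * d) := by
  refine Equiv.ext fun w => ?_; rcases w with _ | ⟨x, w⟩
  · simp [pc]
  · cases x <;> simp [pc]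

theorem I7 : pairPerm (pc a b * pc b c) 1 =
    ⁅pc a b, d⁆ * ⁅d⁻¹ * pc a b * d, b * a⁆ := by
  refine Equiv.ext fun w => ?_; rcases w with _ | ⟨x, w⟩
  · simp [pc, commutatorElement_def]
  · cases x <;> simp [pc, commutatorElement_def]

/-! Level-one decompositions of elements of `G`. -/

def S0 : Subgroup (Perm V) where
  carrier := {g : Perm V | ∃ h : Perm V, pairPerm g h ∈ G}
  one_mem' := ⟨1, by rw [pairPerm_one]; exact one_mem G⟩
  mul_mem' := by
    rintro g g' ⟨h, hh⟩ ⟨h', hh'⟩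
    exact ⟨h * h', by rw [← pairPerm_mul]; exact mul_mem hh hh'⟩
  inv_mem' := by
    rintro g ⟨h, hh⟩
    exact ⟨h⁻¹, by rw [← pairPerm_inv]; exact inv_mem hh⟩

def S1 : Subgroup (Perm V) where
  carrier := {g : Perm V | ∃ h : Perm V, pairPerm h g ∈ G}
  one_mem' := ⟨1, by rw [pairPerm_one]; exact one_mem G⟩
  mul_mem' := by
    rintro g g' ⟨h, hh⟩ ⟨h', hh'⟩
    exact ⟨h * h', by rw [← pairPerm_mul]; exact mul_mem hh hh'⟩
  inv_mem' := by
    rintro g ⟨h, hh⟩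
    exact ⟨h⁻¹, by rw [← pairPerm_inv]; exact inv_mem hh⟩

theorem G_le_S0 : G ≤ S0 := by
  rw [G]
  apply (Subgroup.closure_le S0).mpr
  rintro x (rfl | rfl | rfl | rfl)
  · exact ⟨d, by rw [← c_eq]; exact c_mem_G⟩
  · exact ⟨1, by rw [ada_eq]; exact mul_mem (mul_mem a_mem_G d_mem_G) a_mem_G⟩
  · exact ⟨a, by rw [← b_eq]; exact b_mem_G⟩
  · exact ⟨a, by rw [aca_eq]; exact mul_mem (mul_mem a_mem_G c_mem_G) a_mem_G⟩

theorem G_le_S1 : G ≤ S1 := by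
  rw [G]
  apply (Subgroup.closure_le S1).mpr
  rintro x (rfl | rfl | rfl | rfl)
  · exact ⟨c, by rw [← b_eq]; exact b_mem_G⟩
  · exact ⟨1, by rw [← d_eq]; exact d_mem_G⟩
  · exact ⟨a, by rw [aba_eq]; exact mul_mem (mul_mem a_mem_G b_mem_G) a_mem_G⟩
  · exact ⟨a, by rw [← c_eq]; exact c_mem_G⟩

/-! Conjugation stability. -/

def conjHom (g : Perm V) : Perm V →* Perm V where
  toFun := fun x => g⁻¹ * x * g
  map_one' := by group
  map_mul' := by intro x y; group

theorem K_conj {g : Perm V} (hg : g ∈ G) {k : Perm V} (hk : k ∈ K) :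
    g⁻¹ * k * g ∈ K := by
  have h : K ≤ Subgroup.comap (conjHom g) K := by
    rw [K, ncl]
    apply (Subgroup.closure_le _).mpr
    rintro x ⟨s, hs, h, hh, rfl⟩
    show conjHom g (h⁻¹ * s * h) ∈ Subgroup.closure _
    apply Subgroup.subset_closure
    refine ⟨s, hs, h * g, mul_mem hh hg, ?_⟩
    show g⁻¹ * (h⁻¹ * s * h) * g = _
    group
  exact h hk

theorem KG_conj {g : Perm V} (hg : g ∈ G) {k : Perm V} (hk : k ∈ KG) :
    g⁻¹ * k * g ∈ KG := by
  have h : KG ≤ Subgroup.comap (conjHom g) KG := by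
    conv_lhs => rw [KG]
    apply (Subgroup.commutator_le).mpr
    intro p hp q hq
    show conjHom g ⁅p, q⁆ ∈ KG
    rw [map_commutatorElement]
    have h1 : conjHom g p = g⁻¹ * p * g := rfl
    have h2 : conjHom g q = g⁻¹ * q * g := rfl
    rw [h1, h2, KG]
    exact Subgroup.commutator_mem_commutator (K_conj hg hp)
      (mul_mem (mul_mem (inv_mem hg) hq) hg)
  exact h hk

/-! Membership of the basic elements in `K`. -/

theorem genK {s : Perm V}
    (hs : s ∈ ({pc a b, pc b c, pc b d, pc c d, b * c * d} : Set (Perm V)))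
    {g : Perm V} (hg : g ∈ G) : g⁻¹ * s * g ∈ K :=
  Subgroup.subset_closure ⟨s, hs, g, hg, rfl⟩

theorem memK {s : Perm V}
    (hs : s ∈ ({pc a b, pc b c, pc b d, pc c d, b * c * d} : Set (Perm V))) :
    s ∈ K := by
  have h := genK hs (one_mem G)
  simpa using h

theorem k1_t1 : pairPerm 1 (pc a b) ∈ K := by
  rw [I1]; exact memK (by simp)

theorem k1_t3 : pairPerm 1 (pc b d) ∈ K := by
  rw [I2]; exact inv_mem (memK (by simp))

theorem k1_t2 : pairPerm 1 (pc b c) ∈ K := by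
  rw [I3]
  exact mul_mem
    (mul_mem (genK (by simp) d_mem_G) (genK (by simp) a_mem_G))
    (genK (by simp) (mul_mem (mul_mem a_mem_G b_mem_G) a_mem_G))

theorem k1_t4 : pairPerm 1 (pc c d) ∈ K := by
  rw [I4]
  exact mul_mem (mul_mem (memK (by simp)) (genK (by simp) (mul_mem c_mem_G b_mem_G)))
    (memK (by simp))

theorem k1_t5 : pairPerm 1 (b * c * d) ∈ K := by
  rw [I5]
  exact mul_mem (genK (by simp) d_mem_G) (genK (by simp) d_mem_G)

theorem k0_of_k1 {s : Perm V} (h : pairPerm 1 s ∈ K) : pairPerm s 1 ∈ K := by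
  rw [pairPerm_swap']
  exact K_conj a_mem_G h

/-! `vstar [x]` maps `K` into `K` and `[K,G]` into `[K,G]`. -/

def vh (v : V) : Perm V →* Perm V where
  toFun := vstar v
  map_one' := by
    refine Equiv.ext fun w => ?_
    show vstarFun v (⇑(1 : Perm V)) w = w
    rw [show ⇑(1 : Perm V) = id from rfl]
    exact vstarFun_id v w
  map_mul' := by
    intro g h
    refine Equiv.ext fun w => ?_
    show vstarFun v (⇑(g * h)) w = vstarFun v g (vstarFun v h w)
    rw [vstarFun_comp]
    rfl

theorem K_vstar {x : Bool} {k : Perm V} (hk : k ∈ K) : vstar [x] k ∈ K := by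
  have hle : K ≤ Subgroup.comap (vh [x]) K := by
    conv_lhs => rw [K, ncl]
    apply (Subgroup.closure_le _).mpr
    rintro p ⟨s, hs, g, hg, rfl⟩
    show vstar [x] (g⁻¹ * s * g) ∈ K
    have hsK : vstar [x] s ∈ K := by
      simp only [Set.mem_insert_iff, Set.mem_singleton_iff] at hs
      cases x
      · rw [vstar_false_eq]
        rcases hs with rfl | rfl | rfl | rfl | rfl
        · exact k0_of_k1 k1_t1
        · exact k0_of_k1 k1_t2
        · exact k0_of_k1 k1_t3
        · exact k0_of_k1 k1_t4
        · exact k0_of_k1 k1_t5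
      · rw [vstar_true_eq]
        rcases hs with rfl | rfl | rfl | rfl | rfl
        · exact k1_t1
        · exact k1_t2
        · exact k1_t3
        · exact k1_t4
        · exact k1_t5
    cases x
    · obtain ⟨h1, hP⟩ := G_le_S0 hg
      have e : vstar [false] (g⁻¹ * s * g) =
          (pairPerm g h1)⁻¹ * vstar [false] s * pairPerm g h1 := by
        rw [vstar_false_eq, vstar_false_eq, pair_conj0]
      rw [e]
      exact K_conj hP hsK
    · obtain ⟨h0, hP⟩ := G_le_S1 hg
      have e : vstar [true] (g⁻¹ * s * g) =
          (pairPerm h0 g)⁻¹ * vstar [true] s * pairPerm h0 g := by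
        rw [vstar_true_eq, vstar_true_eq, pair_conj1]
      rw [e]
      exact K_conj hP hsK
  exact hle hk

theorem KG_vstar {x : Bool} {k : Perm V} (hk : k ∈ KG) : vstar [x] k ∈ KG := by
  have hle : KG ≤ Subgroup.comap (vh [x]) KG := by
    conv_lhs => rw [KG]
    apply (Subgroup.commutator_le).mpr
    intro p hp q hq
    show vh [x] ⁅p, q⁆ ∈ KG
    rw [map_commutatorElement]
    show ⁅vstar [x] p, vstar [x] q⁆ ∈ KG
    cases x
    · obtain ⟨h1, hP⟩ := G_le_S0 hq
      have e : ⁅vstar [false] p, vstar [false] q⁆ = ⁅vstar [false] p, pairPerm q h1⁆ := by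
        rw [vstar_false_eq, vstar_false_eq, pair_comm0, pair_comm0]
      rw [e, KG]
      exact Subgroup.commutator_mem_commutator (K_vstar hp) hP
    · obtain ⟨h0, hP⟩ := G_le_S1 hq
      have e : ⁅vstar [true] p, vstar [true] q⁆ = ⁅vstar [true] p, pairPerm h0 q⁆ := by
        rw [vstar_true_eq, vstar_true_eq, pair_comm1, pair_comm1]
      rw [e, KG]
      exact Subgroup.commutator_mem_commutator (K_vstar hp) hP
  exact hle hk

/-! The images of the extra generator of `C` lie in `[K,G]`. -/

theorem kg0_t : pairPerm (pc a b * pc b c) 1 ∈ KG := by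
  rw [I7, KG]
  exact mul_mem
    (Subgroup.commutator_mem_commutator (memK (by simp)) d_mem_G)
    (Subgroup.commutator_mem_commutator (genK (by simp) d_mem_G)
      (mul_mem b_mem_G a_mem_G))

theorem kg1_t : pairPerm 1 (pc a b * pc b c) ∈ KG := by
  rw [pairPerm_swap]
  exact KG_conj a_mem_G kg0_t

theorem vstar_t_mem {x : Bool} : vstar [x] (pc a b * pc b c) ∈ KG := by
  cases x
  · rw [vstar_false_eq]; exact kg0_t
  · rw [vstar_true_eq]; exact kg1_t


/-- **Lemma.** `[K,G]` contains `X*C`. -/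
theorem stmt12 : XstarSub 1 Csub ≤ KG := by
  rw [XstarSub]
  apply (Subgroup.closure_le KG).mpr
  rintro p ⟨v, g, hv, hg, rfl⟩
  obtain ⟨x, rfl⟩ := List.length_eq_one_iff.mp hv
  have hC : Csub ≤ Subgroup.comap (vh [x]) KG := by
    rw [Csub]
    apply sup_le
    · intro w hw
      exact KG_vstar hw
    · apply (Subgroup.closure_le _).mpr
      rintro w rfl
      exact vstar_t_mem
  exact hC hg
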